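/- Let Q₃(r,ψ) = r³M(ψ) + rN(ψ) and Q₆(r,ψ) = 2r²A(ψ) − F(ψ)² − Q₃(r,ψ)², with M, N, A, F differentiable functions of ψ. Then the polynomial identity (in r) ∂_r Q₆ + Q₃ ∂_ψ Q₆ − 2(∂_ψ Q₃) Q₆ = 0 holds for all r if and only if the three ODEs hold: (i) A'M − 3M² − 2AM' = 0; (ii) 8MN + M(F²)' − 2M'F² + N(N²−2A)' − 2N'(N²−2A) = 0; (iii) 2(N²−2A) + N(F²)' − 2N'F² = 0. -/

import Mathlib

/-- Partial derivative in the first variable. -/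
noncomputable def pd1 (f : ℝ → ℝ → ℝ) (x y : ℝ) : ℝ := deriv (fun s => f s y) x

/-- Partial derivative in the second variable. -/
noncomputable def pd2 (f : ℝ → ℝ → ℝ) (x y : ℝ) : ℝ := deriv (fun s => f x s) y

/-- With `Q₃ = r³M + rN` and `Q₆ = 2r²A − F² − Q₃²`, the polynomial identity
in `r`, `∂_r Q₆ + Q₃ ∂_ψ Q₆ − 2(∂_ψ Q₃) Q₆ = 0`, holds for all `r` if and only if the
three ODEs (at the given `ψ`) hold:
(i) `A'M − 3M² − 2AM' = 0`;
(ii) `8MN + M(F²)' − 2M'F² + N(N²−2A)' − 2N'(N²−2A) = 0`;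
(iii) `2(N²−2A) + N(F²)' − 2N'F² = 0`. -/
theorem polynomial_compatibility_iff_odes
    (M N A F : ℝ → ℝ) (ψ : ℝ)
    (hM : DifferentiableAt ℝ M ψ) (hN : DifferentiableAt ℝ N ψ)
    (hA : DifferentiableAt ℝ A ψ) (hF : DifferentiableAt ℝ F ψ)
    (Q3 Q6 : ℝ → ℝ → ℝ)
    (hQ3 : ∀ r t, Q3 r t = r^3 * M t + r * N t)
    (hQ6 : ∀ r t, Q6 r t = 2*r^2*A t - (F t)^2 - (Q3 r t)^2) :
    (∀ r : ℝ, pd1 Q6 r ψ + Q3 r ψ * pd2 Q6 r ψ - 2 * pd2 Q3 r ψ * Q6 r ψ = 0) ↔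
      (deriv A ψ * M ψ - 3*(M ψ)^2 - 2*A ψ*deriv M ψ = 0 ∧
       8*M ψ*N ψ + M ψ*deriv (fun t => (F t)^2) ψ - 2*deriv M ψ*(F ψ)^2
         + N ψ*deriv (fun t => (N t)^2 - 2*A t) ψ
         - 2*deriv N ψ*((N ψ)^2 - 2*A ψ) = 0 ∧
       2*((N ψ)^2 - 2*A ψ) + N ψ*deriv (fun t => (F t)^2) ψ
         - 2*deriv N ψ*(F ψ)^2 = 0) := by
  set m := M ψ
  set n := N ψ
  set a := A ψ
  set f := F ψ
  set m' := deriv M ψ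
  set n' := deriv N ψ
  set a' := deriv A ψ
  set f' := deriv F ψ
  -- derivative of F^2
  have hF2 : deriv (fun t => (F t)^2) ψ = 2*f*f' := by
    have := (hF.hasDerivAt.pow 2).deriv
    simpa [f, f', Pi.pow_def] using this
  have hNA : deriv (fun t => (N t)^2 - 2*A t) ψ = 2*n*n' - 2*a' := by
    have := ((hN.hasDerivAt.pow 2).sub ((hA.hasDerivAt.const_mul (2:ℝ)))).deriv
    simpa [n, n', a', Pi.pow_def, Pi.sub_def] using this
  -- pd1 Q6
  have h1 : ∀ r : ℝ, pd1 Q6 r ψ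
      = 4*r*a - 2*(r^3*m + r*n)*(3*r^2*m + n) := by
    intro r
    have hfun : (fun s => Q6 s ψ)
        = fun s => 2*s^2*a - f^2 - (s^3*m + s*n)^2 := by
      funext s; rw [hQ6, hQ3]
    have hq3 : HasDerivAt (fun s : ℝ => s^3*m + s*n) (3*r^2*m + n) r := by
      have := ((hasDerivAt_pow 3 r).mul_const m).add ((hasDerivAt_id r).mul_const n)
      simpa [Pi.add_def] using this
    have H : HasDerivAt (fun s : ℝ => 2*s^2*a - f^2 - (s^3*m + s*n)^2)
        (4*r*a - 2*(r^3*m + r*n)*(3*r^2*m + n)) r := by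
      have h2 : HasDerivAt (fun s : ℝ => 2*s^2*a) (4*r*a) r := by
        have := ((hasDerivAt_pow 2 r).const_mul (2:ℝ)).mul_const a
        exact this.congr_deriv (by ring)
      have := (h2.sub_const (f^2)).sub (hq3.pow 2)
      exact this.congr_deriv (by ring)
    rw [pd1, hfun, H.deriv]
  -- pd2 Q6
  have h2 : ∀ r : ℝ, pd2 Q6 r ψ
      = 2*r^2*a' - 2*f*f' - 2*(r^3*m + r*n)*(r^3*m' + r*n') := by
    intro r
    have hfun : (fun t => Q6 r t)
        = fun t => 2*r^2*A t - (F t)^2 - (r^3*M t + r*N t)^2 := by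
      funext t; rw [hQ6, hQ3]
    have hq3 : HasDerivAt (fun t => r^3*M t + r*N t) (r^3*m' + r*n') ψ := by
      exact (hM.hasDerivAt.const_mul (r^3)).add (hN.hasDerivAt.const_mul r)
    have H : HasDerivAt (fun t => 2*r^2*A t - (F t)^2 - (r^3*M t + r*N t)^2)
        (2*r^2*a' - 2*f*f' - 2*(r^3*m + r*n)*(r^3*m' + r*n')) ψ := by
      have := ((hA.hasDerivAt.const_mul (2*r^2)).sub (hF.hasDerivAt.pow 2)).sub (hq3.pow 2)
      exact this.congr_deriv (by ring)
    rw [pd2, hfun, H.deriv]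
  -- pd2 Q3
  have h3 : ∀ r : ℝ, pd2 Q3 r ψ = r^3*m' + r*n' := by
    intro r
    have hfun : (fun t => Q3 r t) = fun t => r^3*M t + r*N t := by
      funext t; rw [hQ3]
    have H : HasDerivAt (fun t => r^3*M t + r*N t) (r^3*m' + r*n') ψ :=
      (hM.hasDerivAt.const_mul (r^3)).add (hN.hasDerivAt.const_mul r)
    rw [pd2, hfun, H.deriv]
  -- the key polynomial form
  have key : ∀ r : ℝ, pd1 Q6 r ψ + Q3 r ψ * pd2 Q6 r ψ - 2 * pd2 Q3 r ψ * Q6 r ψ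
      = (2*(a'*m - 3*m^2 - 2*a*m'))*r^5
        + (-(8*m*n + 2*m*f*f' - 2*m'*f^2 + n*(2*n*n'-2*a') - 2*n'*(n^2-2*a)))*r^3
        + (-(2*(n^2-2*a) + 2*n*f*f' - 2*n'*f^2))*r := by
    intro r
    rw [h1 r, h2 r, h3 r, hQ6, hQ3]
    ring
  rw [hF2, hNA]
  constructor
  · intro h
    have e1 := h 1
    have e2 := h 2
    have e3 := h 3
    rw [key 1] at e1
    rw [key 2] at e2
    rw [key 3] at e3
    refine ⟨by linarith, by linarith, by linarith⟩
  · rintro ⟨o1, o2, o3⟩ r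
    rw [key r]
    have c1 : 2*(a'*m - 3*m^2 - 2*a*m') = 0 := by linarith
    have c2 : -(8*m*n + 2*m*f*f' - 2*m'*f^2 + n*(2*n*n'-2*a') - 2*n'*(n^2-2*a)) = 0 := by
      nlinarith [o2]
    have c3 : -(2*(n^2-2*a) + 2*n*f*f' - 2*n'*f^2) = 0 := by linarith
    rw [c1, c2, c3]; ring
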